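/- arXiv:2508.05108 — 2 statements merged into one kernel-verified Lean document; each statement's English description precedes it below -/
import Mathlib

section
/- (Lemma 1, λ-weighted unbiased risk estimators.) For every λ ∈ [0,1], the λ-weighted estimator Ŝ_λ(D) = (1/n)·Σ_{i=1}^{n} (λ·L(xᵢ,xᵢ') + (1−λ)·L(xᵢ',xᵢ)) satisfies ∫ Ŝ_λ dν = R; i.e., every such λ-weighted estimator is an unbiased estimator of the classification risk. -/
open MeasureTheory Function

lemma map_eval_pi' {ι : Type*} [Fintype ι] [DecidableEq ι] {α : ι → Type*}
    [∀ i, MeasurableSpace (α i)]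
    (μ : ∀ i, Measure (α i)) [∀ i, IsProbabilityMeasure (μ i)] (i : ι) :
    (Measure.pi μ).map (Function.eval i) = μ i := by
  ext s hs
  rw [Measure.map_apply (measurable_pi_apply i) hs, Set.eval_preimage, Measure.pi_pi]
  rw [Finset.prod_eq_single i]
  · simp
  · intro j _ hj; simp [Function.update_of_ne hj]
  · simp

lemma integrable_of_bdd' {α : Type*} [MeasurableSpace α] (μ : Measure α) [IsFiniteMeasure μ]
    {f : α → ℝ} (hf : Measurable f) (C : ℝ) (h : ∀ x, |f x| ≤ C) : Integrable f μ :=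
  ⟨hf.aestronglyMeasurable, HasFiniteIntegral.of_bounded (Filter.Eventually.of_forall h)⟩

/-- (Lemma 1, λ-weighted unbiased risk estimators.) Every λ-weighted estimator,
λ ∈ [0,1], is an unbiased estimator of the classification risk. -/
theorem sconfconfdiff_lambda_weighted_unbiased
    {X : Type*} [MeasurableSpace X] (μ : Measure X) [IsProbabilityMeasure μ]
    (η : X → ℝ) (hη : Measurable η) (hη0 : ∀ x, 0 ≤ η x) (hη1 : ∀ x, η x ≤ 1)
    (πp πm : ℝ) (hπp : πp = ∫ x, η x ∂μ) (hπm : πm = 1 - πp)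
    (s c : X → X → ℝ)
    (hs : ∀ x x', s x x' = η x * η x' + (1 - η x) * (1 - η x'))
    (hc : ∀ x x', c x x' = η x' - η x)
    (Cℓ : ℝ) (hCℓ : 0 ≤ Cℓ)
    (ℓp ℓm : X → ℝ) (hℓp : Measurable ℓp) (hℓm : Measurable ℓm)
    (hℓp0 : ∀ x, 0 ≤ ℓp x) (hℓpC : ∀ x, ℓp x ≤ Cℓ)
    (hℓm0 : ∀ x, 0 ≤ ℓm x) (hℓmC : ∀ x, ℓm x ≤ Cℓ)
    (R : ℝ) (hR : R = ∫ x, (η x * ℓp x + (1 - η x) * ℓm x) ∂μ)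
    (L : X → X → ℝ)
    (hL : ∀ x x', L x x' =
      (2 * πp * (πp - c x x') + πm - s x x') * ℓp x
      + (2 * πm * (πm - c x x') + πp - s x x') * ℓm x')
    (n : ℕ) (hn : 1 ≤ n)
    (ν : Measure (Fin n → X × X)) (hν : ν = Measure.pi fun _ => μ.prod μ) :
    ∀ lam ∈ Set.Icc (0 : ℝ) 1,
      ∫ D, (1 / (n : ℝ)) *
        ∑ i, (lam * L (D i).1 (D i).2 + (1 - lam) * L (D i).2 (D i).1) ∂ν = R := by
  subst hπm hν
  rintro lam ⟨hl0, hl1⟩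
  -- basic facts
  have Iη : Integrable η μ :=
    integrable_of_bdd' μ hη 1 fun x => abs_le.2 ⟨by linarith [hη0 x], hη1 x⟩
  have hπp0 : 0 ≤ πp := hπp ▸ integral_nonneg hη0
  have hπp1 : πp ≤ 1 := by
    rw [hπp]
    calc ∫ x, η x ∂μ ≤ ∫ _, (1 : ℝ) ∂μ := integral_mono Iη (integrable_const 1) hη1
    _ = 1 := by simp
  -- the two halves of L as functions on the product
  set A : X × X → ℝ := fun p =>
    (2 * πp * (πp - (η p.2 - η p.1)) + (1 - πp)
      - (η p.1 * η p.2 + (1 - η p.1) * (1 - η p.2))) * ℓp p.1 with hA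
  set B : X × X → ℝ := fun p =>
    (2 * (1 - πp) * ((1 - πp) - (η p.2 - η p.1)) + πp
      - (η p.1 * η p.2 + (1 - η p.1) * (1 - η p.2))) * ℓm p.2 with hB
  have hABL : ∀ p : X × X, L p.1 p.2 = A p + B p := by
    intro p; rw [hL, hs, hc]
  have mη1 : Measurable fun p : X × X => η p.1 := hη.comp measurable_fst
  have mη2 : Measurable fun p : X × X => η p.2 := hη.comp measurable_snd
  have mA : Measurable A := by
    apply Measurable.mul _ (hℓp.comp measurable_fst)
    exact (((measurable_const.mul ((measurable_const.sub (mη2.sub mη1)))).add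
      measurable_const).sub ((mη1.mul mη2).add
      ((measurable_const.sub mη1).mul (measurable_const.sub mη2))))
  have mB : Measurable B := by
    apply Measurable.mul _ (hℓm.comp measurable_snd)
    exact (((measurable_const.mul ((measurable_const.sub (mη2.sub mη1)))).add
      measurable_const).sub ((mη1.mul mη2).add
      ((measurable_const.sub mη1).mul (measurable_const.sub mη2))))
  have keymul : ∀ (a t : ℝ), |a| ≤ 5 → 0 ≤ t → t ≤ Cℓ → |a * t| ≤ 5 * Cℓ := by
    intro a t ha ht0 htC
    rw [abs_mul, abs_of_nonneg ht0]
    exact mul_le_mul ha htC ht0 (by norm_num)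
  have bA : ∀ p : X × X, |A p| ≤ 5 * Cℓ := by
    intro p
    refine keymul _ _ ?_ (hℓp0 p.1) (hℓpC p.1)
    have h1 := hη0 p.1; have h2 := hη1 p.1; have h3 := hη0 p.2; have h4 := hη1 p.2
    rw [abs_le]
    constructor <;> nlinarith [mul_nonneg h1 h3, mul_nonneg (sub_nonneg.2 h2) (sub_nonneg.2 h4),
      mul_nonneg hπp0 (sub_nonneg.2 hπp1), sq_nonneg (πp - 1), sq_nonneg πp]
  have bB : ∀ p : X × X, |B p| ≤ 5 * Cℓ := by
    intro p
    refine keymul _ _ ?_ (hℓm0 p.2) (hℓmC p.2)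
    have h1 := hη0 p.1; have h2 := hη1 p.1; have h3 := hη0 p.2; have h4 := hη1 p.2
    rw [abs_le]
    constructor <;> nlinarith [mul_nonneg h1 h3, mul_nonneg (sub_nonneg.2 h2) (sub_nonneg.2 h4),
      mul_nonneg hπp0 (sub_nonneg.2 hπp1), sq_nonneg (πp - 1), sq_nonneg πp]
  have hIA : Integrable A (μ.prod μ) := integrable_of_bdd' _ mA (5 * Cℓ) bA
  have hIB : Integrable B (μ.prod μ) := integrable_of_bdd' _ mB (5 * Cℓ) bB
  -- ∫ A = ∫ η ℓp
  have intA : ∫ p, A p ∂(μ.prod μ) = ∫ x, η x * ℓp x ∂μ := by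
    rw [integral_prod _ hIA]
    have : (fun x => ∫ y, A (x, y) ∂μ) = fun x => η x * ℓp x := by
      funext x
      simp only [hA]
      rw [integral_mul_const]
      have hco : (fun y => 2 * πp * (πp - (η y - η x)) + (1 - πp)
          - (η x * η y + (1 - η x) * (1 - η y)))
          = fun y => (2 * πp * (πp + η x) + (1 - πp) - (1 - η x))
            + (-(2 * πp) - η x + (1 - η x)) * η y := by
        funext y; ring
      rw [hco, integral_add (integrable_const _) (Iη.const_mul _), integral_const,
        integral_const_mul, ← hπp]
      simp only [measure_univ, ENNReal.toReal_one, one_smul, probReal_univ]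
      ring
    rw [this]
  -- ∫ B = ∫ (1-η) ℓm
  have intB : ∫ p, B p ∂(μ.prod μ) = ∫ x, (1 - η x) * ℓm x ∂μ := by
    rw [integral_prod_symm _ hIB]
    have : (fun y => ∫ x, B (x, y) ∂μ) = fun y => (1 - η y) * ℓm y := by
      funext y
      simp only [hB]
      rw [integral_mul_const]
      have hco : (fun x => 2 * (1 - πp) * ((1 - πp) - (η y - η x)) + πp
          - (η x * η y + (1 - η x) * (1 - η y)))
          = fun x => (2 * (1 - πp) * ((1 - πp) - η y) + πp - (1 - η y))
            + (2 * (1 - πp) - η y + (1 - η y)) * η x := by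
        funext x; ring
      rw [hco, integral_add (integrable_const _) (Iη.const_mul _), integral_const,
        integral_const_mul, ← hπp]
      simp only [measure_univ, ENNReal.toReal_one, one_smul, probReal_univ]
      ring
    rw [this]
  -- ∫ L = R
  have IL : Integrable (fun p : X × X => L p.1 p.2) (μ.prod μ) :=
    (hIA.add hIB).congr (Filter.Eventually.of_forall fun p => (hABL p).symm)
  have hprod : ∫ p : X × X, L p.1 p.2 ∂(μ.prod μ) = R := by
    have hfe : (fun p : X × X => L p.1 p.2) = fun p => A p + B p := funext hABL
    rw [hfe, integral_add hIA hIB, intA, intB, hR,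
      integral_add (integrable_of_bdd' μ (f := fun x => η x * ℓp x) (hη.mul hℓp) Cℓ ?_)
        (integrable_of_bdd' μ (f := fun x => (1 - η x) * ℓm x) ((measurable_const.sub hη).mul hℓm) Cℓ ?_)]
    · intro x
      rw [abs_mul, abs_of_nonneg (hη0 x), abs_of_nonneg (hℓp0 x)]
      calc η x * ℓp x ≤ 1 * Cℓ := mul_le_mul (hη1 x) (hℓpC x) (hℓp0 x) one_pos.le
      _ = Cℓ := one_mul _
    · intro x
      rw [abs_mul, abs_of_nonneg (by linarith [hη1 x] : (0:ℝ) ≤ 1 - η x),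
        abs_of_nonneg (hℓm0 x)]
      calc (1 - η x) * ℓm x ≤ 1 * Cℓ :=
        mul_le_mul (by linarith [hη0 x]) (hℓmC x) (hℓm0 x) one_pos.le
      _ = Cℓ := one_mul _
  have hswap : ∫ p : X × X, L p.2 p.1 ∂(μ.prod μ) = R := by
    have h := integral_prod_swap (μ := μ) (ν := μ) (fun p : X × X => L p.1 p.2)
    simp only [Prod.fst_swap, Prod.snd_swap] at h
    rw [h, hprod]
  -- the estimator on a single pair
  set f : X × X → ℝ := fun p => lam * L p.1 p.2 + (1 - lam) * L p.2 p.1 with hf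
  have ILs : Integrable (fun p : X × X => L p.2 p.1) (μ.prod μ) := IL.swap
  have If : Integrable f (μ.prod μ) := (IL.const_mul lam).add (ILs.const_mul (1 - lam))
  have hfint : ∫ p, f p ∂(μ.prod μ) = R := by
    rw [hf, integral_add (IL.const_mul lam) (ILs.const_mul (1 - lam)),
      integral_const_mul, integral_const_mul, hprod, hswap]
    ring
  -- pull back along eval
  have hmap : ∀ i : Fin n,
      (Measure.pi fun _ : Fin n => μ.prod μ).map (Function.eval i) = μ.prod μ :=
    fun i => map_eval_pi' _ i
  have mL : Measurable (fun p : X × X => L p.1 p.2) := by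
    have hfe : (fun p : X × X => L p.1 p.2) = fun p => A p + B p := funext hABL
    rw [hfe]; exact mA.add mB
  have mf : Measurable f :=
    ((mL.const_mul lam)).add ((mL.comp measurable_swap).const_mul (1 - lam))
  have Ii : ∀ i : Fin n,
      Integrable (fun D : Fin n → X × X => f (D i)) (Measure.pi fun _ => μ.prod μ) := by
    intro i
    have h1 : Integrable f ((Measure.pi fun _ : Fin n => μ.prod μ).map (Function.eval i)) := by
      rw [hmap i]; exact If
    exact (integrable_map_measure mf.aestronglyMeasurable
      (measurable_pi_apply i).aemeasurable).mp h1
  have heach : ∀ i : Fin n,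
      ∫ D, f (D i) ∂(Measure.pi fun _ : Fin n => μ.prod μ) = R := by
    intro i
    calc ∫ D, f (D i) ∂(Measure.pi fun _ : Fin n => μ.prod μ)
        = ∫ p, f p ∂((Measure.pi fun _ : Fin n => μ.prod μ).map (Function.eval i)) :=
          (integral_map (measurable_pi_apply i).aemeasurable mf.aestronglyMeasurable).symm
      _ = R := by rw [hmap i, hfint]
  have hn0 : (n : ℝ) ≠ 0 := Nat.cast_ne_zero.2 (by omega)
  show ∫ D, (1 / (n : ℝ)) * ∑ i, f (D i) ∂(Measure.pi fun _ : Fin n => μ.prod μ) = R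
  rw [integral_const_mul, integral_finset_sum _ (fun i _ => Ii i)]
  simp only [heach, Finset.sum_const, Finset.card_univ, Fintype.card_fin, nsmul_eq_mul]
  field_simp
end

section
/- (Lemma A.2, Sconf identity.) Assume π₊ > 0. Then ∫∫ s(x,x')·ℓ₊(x) d(μ⊗μ)(x,x') − (π₋/π₊)·∫∫ (1 − s(x,x'))·ℓ₊(x) d(μ⊗μ)(x,x') = ((π₊ − π₋)/π₊)·∫ η(x)·ℓ₊(x) dμ(x). (The right-hand side equals (π₊ − π₋)·E_{p(x|y=+1)}[ℓ₊(x)], since E_{p(x|y=+1)}[ℓ₊] = (1/π₊)·∫ η·ℓ₊ dμ.) -/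
open MeasureTheory

private lemma bdd_integrable {X : Type*} [MeasurableSpace X] (μ : Measure X)
    [IsFiniteMeasure μ] (f : X → ℝ) (hf : Measurable f) (C : ℝ)
    (hbd : ∀ x, |f x| ≤ C) : Integrable f μ := by
  apply Integrable.mono' (integrable_const C) hf.aestronglyMeasurable
  filter_upwards with x
  simpa using hbd x

/-- (Lemma A.2, Sconf identity.) -/
theorem sconf_identity
    {X : Type*} [MeasurableSpace X] (μ : Measure X) [IsProbabilityMeasure μ]
    (η : X → ℝ) (hη : Measurable η) (hη0 : ∀ x, 0 ≤ η x) (hη1 : ∀ x, η x ≤ 1)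
    (πp πm : ℝ) (hπp : πp = ∫ x, η x ∂μ) (hπm : πm = 1 - πp) (hπppos : 0 < πp)
    (s : X → X → ℝ)
    (hs : ∀ x x', s x x' = η x * η x' + (1 - η x) * (1 - η x'))
    (Cℓ : ℝ) (hCℓ : 0 ≤ Cℓ)
    (ℓp : X → ℝ) (hℓp : Measurable ℓp)
    (hℓp0 : ∀ x, 0 ≤ ℓp x) (hℓpC : ∀ x, ℓp x ≤ Cℓ) :
    (∫ p : X × X, s p.1 p.2 * ℓp p.1 ∂(μ.prod μ))
      - (πm / πp) * ∫ p : X × X, (1 - s p.1 p.2) * ℓp p.1 ∂(μ.prod μ)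
      = ((πp - πm) / πp) * ∫ x, η x * ℓp x ∂μ := by
  have hηint : Integrable η μ := bdd_integrable μ η hη 1 (fun x => by
    rw [abs_le]; constructor <;> [linarith [hη0 x]; exact hη1 x])
  have hη1int : Integrable (fun x => 1 - η x) μ := (integrable_const 1).sub hηint
  have hint1η : ∫ x, (1 - η x) ∂μ = πm := by
    rw [integral_sub (integrable_const 1) hηint, integral_const]
    simp [hπm, hπp]
  have hs01 : ∀ x x', 0 ≤ s x x' ∧ s x x' ≤ 1 := by
    intro x x'
    rw [hs]
    have := hη0 x; have := hη0 x'; have := hη1 x; have := hη1 x'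
    constructor <;> nlinarith
  have hsmeas : Measurable (fun p : X × X => s p.1 p.2) := by
    have : (fun p : X × X => s p.1 p.2)
        = fun p : X × X => η p.1 * η p.2 + (1 - η p.1) * (1 - η p.2) := by
      funext p; rw [hs]
    rw [this]
    exact ((hη.comp measurable_fst).mul (hη.comp measurable_snd)).add
      ((measurable_const.sub (hη.comp measurable_fst)).mul
        (measurable_const.sub (hη.comp measurable_snd)))
  have habs : ∀ (x : X), |ℓp x| ≤ Cℓ := fun x => by
    rw [abs_le]; exact ⟨by linarith [hℓp0 x], hℓpC x⟩
  have hint1 : Integrable (fun p : X × X => s p.1 p.2 * ℓp p.1) (μ.prod μ) := by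
    apply bdd_integrable _ _ (hsmeas.mul (hℓp.comp measurable_fst)) Cℓ
    intro p
    rw [Pi.mul_apply, abs_mul]
    calc |s p.1 p.2| * |ℓp p.1| ≤ 1 * Cℓ := by
          apply mul_le_mul _ (habs p.1) (abs_nonneg _) zero_le_one
          rw [abs_le]
          exact ⟨by linarith [(hs01 p.1 p.2).1], (hs01 p.1 p.2).2⟩
      _ = Cℓ := one_mul _
  have hint2 : Integrable (fun p : X × X => (1 - s p.1 p.2) * ℓp p.1) (μ.prod μ) := by
    apply bdd_integrable _ _
      ((measurable_const.sub hsmeas).mul (hℓp.comp measurable_fst)) Cℓ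
    intro p
    rw [Pi.mul_apply, abs_mul]
    calc |1 - s p.1 p.2| * |ℓp p.1| ≤ 1 * Cℓ := by
          apply mul_le_mul _ (habs p.1) (abs_nonneg _) zero_le_one
          rw [abs_le]
          exact ⟨by linarith [(hs01 p.1 p.2).2], by linarith [(hs01 p.1 p.2).1]⟩
      _ = Cℓ := one_mul _
  -- inner integral of s
  have hinner : ∀ x, ∫ y, s x y ∂μ = η x * πp + (1 - η x) * πm := by
    intro x
    have : (fun y => s x y) = fun y => η x * η y + (1 - η x) * (1 - η y) := by
      funext y; rw [hs]
    rw [this, integral_add (hηint.const_mul _) (hη1int.const_mul _),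
      integral_const_mul, integral_const_mul, hint1η, ← hπp]
  -- Fubini for both product integrals
  have key1 : (∫ p : X × X, s p.1 p.2 * ℓp p.1 ∂(μ.prod μ))
      = ∫ x, (η x * πp + (1 - η x) * πm) * ℓp x ∂μ := by
    rw [integral_prod _ hint1]
    refine integral_congr_ae (Filter.Eventually.of_forall fun x => ?_)
    dsimp only
    rw [integral_mul_const, hinner]
  have key2 : (∫ p : X × X, (1 - s p.1 p.2) * ℓp p.1 ∂(μ.prod μ))
      = ∫ x, (1 - (η x * πp + (1 - η x) * πm)) * ℓp x ∂μ := by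
    rw [integral_prod _ hint2]
    refine integral_congr_ae (Filter.Eventually.of_forall fun x => ?_)
    dsimp only
    rw [integral_mul_const]
    congr 1
    rw [integral_sub (integrable_const 1) (by
      have : s x = fun y => η x * η y + (1 - η x) * (1 - η y) := by
        funext y; rw [hs]
      rw [this]
      exact (hηint.const_mul _).add (hη1int.const_mul _)), integral_const, hinner]
    simp
  rw [key1, key2]
  -- integrability of the single-variable integrands
  have hπp1 : πp ≤ 1 := by
    rw [hπp]
    calc ∫ x, η x ∂μ ≤ ∫ _x, (1 : ℝ) ∂μ := integral_mono hηint (integrable_const 1) hη1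
      _ = 1 := by simp
  have hA : ∀ x, |(η x * πp + (1 - η x) * πm)| ≤ 1 := by
    intro x
    have := hη0 x; have := hη1 x
    rw [abs_le, hπm]
    constructor <;> nlinarith
  have hAmeas : Measurable fun x => (η x * πp + (1 - η x) * πm) * ℓp x :=
    ((hη.mul measurable_const).add ((measurable_const.sub hη).mul measurable_const)).mul hℓp
  have hi1 : Integrable (fun x => (η x * πp + (1 - η x) * πm) * ℓp x) μ := by
    apply bdd_integrable _ _ hAmeas Cℓ
    intro x
    rw [abs_mul]
    calc _ ≤ 1 * Cℓ := mul_le_mul (hA x) (habs x) (abs_nonneg _) zero_le_one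
      _ = Cℓ := one_mul _
  have hi2 : Integrable (fun x => (1 - (η x * πp + (1 - η x) * πm)) * ℓp x) μ := by
    apply bdd_integrable _ _ ((measurable_const.sub
      ((hη.mul measurable_const).add ((measurable_const.sub hη).mul measurable_const))).mul hℓp) (2 * Cℓ)
    intro x
    rw [Pi.mul_apply, abs_mul]
    have h := hA x
    rw [abs_le] at h
    have h2 : |1 - (η x * πp + (1 - η x) * πm)| ≤ 2 := by
      rw [abs_le]; constructor <;> linarith
    exact mul_le_mul h2 (habs x) (abs_nonneg _) (by norm_num)
  rw [← integral_const_mul, ← integral_sub hi1 (hi2.const_mul _), ← integral_const_mul]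
  refine integral_congr_ae (Filter.Eventually.of_forall fun x => ?_)
  subst hπm
  field_simp
  ring
end
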